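/- Let G be a countable group acting by homeomorphisms on a compact Hausdorff space X, and let φ be a homeomorphism of X commuting with the action of every g ∈ G. If the action of Aut(G,X) on X is proximal (for every x, y ∈ X there is a net (g_i) in Aut(G,X) with lim g_i x = lim g_i y) and the G-action is free (g x ≠ x for all x and all nontrivial g), then we reach a contradiction; i.e., if (G,X) is free then (Aut(G,X), X) is not proximal. -/

import Mathlib

open Filter Topology

/-- If a continuous action of a nontrivial group `G` on a nonempty compact Hausdorff space `X`
is free, then the action of the automorphism group `Aut(G,X)` (homeomorphisms commuting with
every `g ∈ G`) on `X` is not proximal. -/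
theorem stmt0 {G X : Type*} [Group G] [Countable G] [TopologicalSpace X]
    [CompactSpace X] [T2Space X] [Nonempty X] [Nontrivial G]
    [MulAction G X] (hcont : ∀ g : G, Continuous (fun x : X => g • x))
    (hfree : ∀ (g : G) (x : X), g • x = x → g = 1)
    (hprox : ∀ x y : X, ∃ (ι : Type) (l : Filter ι) (_ : l.NeBot)
      (φ : ι → {ψ : X ≃ₜ X // ∀ (g : G) (z : X), ψ (g • z) = g • ψ z}) (w : X),
      Tendsto (fun i => (φ i).val x) l (𝓝 w) ∧ Tendsto (fun i => (φ i).val y) l (𝓝 w)) :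
    False := by
  obtain ⟨g, hg⟩ := exists_ne (1 : G)
  obtain ⟨x⟩ := ‹Nonempty X›
  obtain ⟨ι, l, hl, φ, w, h1, h2⟩ := hprox x (g • x)
  have h3 : Tendsto (fun i => (φ i).val (g • x)) l (𝓝 (g • w)) := by
    have := ((hcont g).tendsto w).comp h1
    simpa [Function.comp_def, fun i => (φ i).prop g x] using this
  exact hg (hfree g w (tendsto_nhds_unique h3 h2))
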